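/- arXiv:1912.00681 — 4 statements merged into one kernel-verified Lean document; each statement's English description precedes it below -/
import Mathlib

section
/- If X is a nonnegative random variable that is New-Better-than-Used (NBU), i.e., its survival function satisfies F̄(t₁+t₂) ≤ F̄(t₁)·F̄(t₂) for all t₁,t₂ ≥ 0, and X₁,...,X_d are i.i.d. copies of X, then E[min{X₁,...,X_d}] ≥ (1/d)·E[X]. -/
open MeasureTheory ProbabilityTheory

/-- If `X 0, …, X (d-1)` are i.i.d. nonnegative random variables whose common
survival function is NBU, then `E[min_i X i] ≥ (1/d) E[X]`. -/
theorem nbu_min_expectation_ge {Ω : Type*} [MeasureSpace Ω]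
    [IsProbabilityMeasure (ℙ : Measure Ω)]
    (d : ℕ) (hd : 0 < d) (X : Fin d → Ω → ℝ)
    (hmeas : ∀ i, Measurable (X i))
    (hnonneg : ∀ i ω, 0 ≤ X i ω)
    (hint : Integrable (X ⟨0, hd⟩))
    (hiid : iIndepFun X ℙ)
    (hid : ∀ i, IdentDistrib (X i) (X ⟨0, hd⟩) ℙ ℙ)
    (hNBU : ∀ t₁ t₂ : ℝ, 0 ≤ t₁ → 0 ≤ t₂ →
      (ℙ {ω | X ⟨0, hd⟩ ω > t₁ + t₂}).toReal ≤
        (ℙ {ω | X ⟨0, hd⟩ ω > t₁}).toReal * (ℙ {ω | X ⟨0, hd⟩ ω > t₂}).toReal) :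
    (1 / (d : ℝ)) * ∫ ω, X ⟨0, hd⟩ ω ≤ ∫ ω, ⨅ i, X i ω := by
  haveI : NeZero d := ⟨hd.ne'⟩
  set i0 : Fin d := ⟨0, hd⟩ with hi0
  set F : ℝ → ENNReal := fun t => ℙ {ω | t < X i0 ω} with hF
  -- basic facts about F
  have hFle : ∀ t, F t ≤ 1 := fun t => prob_le_one
  have hFne : ∀ t, F t ≠ ⊤ := fun t => (lt_of_le_of_lt (hFle t) ENNReal.one_lt_top).ne
  have hFmble : Measurable F :=
    Antitone.measurable (fun s t hst => measure_mono (fun ω h => lt_of_le_of_lt hst h))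
  -- ENNReal version of NBU
  have hNBU' : ∀ t₁ t₂ : ℝ, 0 ≤ t₁ → 0 ≤ t₂ → F (t₁ + t₂) ≤ F t₁ * F t₂ := by
    intro t₁ t₂ h₁ h₂
    have := hNBU t₁ t₂ h₁ h₂
    rw [← ENNReal.toReal_mul] at this
    exact (ENNReal.toReal_le_toReal (hFne _) (ENNReal.mul_ne_top (hFne _) (hFne _))).mp this
  -- power inequality: F (n * t) ≤ F t ^ n for t ≥ 0, n ≥ 1
  have hpow : ∀ t : ℝ, 0 ≤ t → ∀ n : ℕ, 1 ≤ n → F (n * t) ≤ F t ^ n := by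
    intro t ht n hn
    induction n with
    | zero => omega
    | succ m ih =>
      rcases Nat.eq_or_lt_of_le hn with h1 | h1
      · simp [← h1]
      · have hm : 1 ≤ m := by omega
        have step : F ((m : ℝ) * t + t) ≤ F ((m : ℝ) * t) * F t :=
          hNBU' _ _ (mul_nonneg (Nat.cast_nonneg m) ht) ht
        calc F ((m + 1 : ℕ) * t) = F ((m : ℝ) * t + t) := by push_cast; ring_nf
          _ ≤ F ((m : ℝ) * t) * F t := step
          _ ≤ F t ^ m * F t := mul_le_mul_left (ih hm) _
          _ = F t ^ (m + 1) := by ring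
  -- the min function
  set m : Ω → ℝ := fun ω => ⨅ i, X i ω with hm
  have hmmble : Measurable m := Measurable.iInf hmeas
  have hmnonneg : ∀ ω, 0 ≤ m ω := fun ω => le_ciInf (fun i => hnonneg i ω)
  have hset : ∀ t : ℝ, {ω | t < m ω} = ⋂ i, {ω | t < X i ω} := by
    intro t
    ext ω
    simp only [Set.mem_setOf_eq, Set.mem_iInter]
    constructor
    · intro h i
      exact lt_of_lt_of_le h (ciInf_le (Set.finite_range _).bddBelow i)
    · intro h
      obtain ⟨j, hj⟩ := exists_eq_ciInf_of_finite (f := fun i => X i ω)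
      show t < ⨅ i, X i ω
      rw [← hj]
      exact h j
  have hprod : ∀ t : ℝ, ℙ {ω | t < m ω} = F t ^ d := by
    intro t
    rw [hset t]
    have hpre : (⋂ i, {ω | t < X i ω}) = ⋂ i, X i ⁻¹' Set.Ioi t := rfl
    rw [hpre, hiid.meas_iInter (fun i => ⟨Set.Ioi t, measurableSet_Ioi, rfl⟩)]
    have : ∀ i : Fin d, ℙ {ω | t < X i ω} = F t := by
      intro i
      exact (hid i).measure_mem_eq measurableSet_Ioi
    calc ∏ i : Fin d, ℙ (X i ⁻¹' Set.Ioi t) = ∏ i : Fin d, F t := by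
          apply Finset.prod_congr rfl; intro i _; exact this i
      _ = F t ^ d := by simp
  -- layer cake for X i0 and m
  have hX0nn : 0 ≤ᵐ[ℙ] X i0 := Filter.Eventually.of_forall (hnonneg i0)
  have hmnn : 0 ≤ᵐ[ℙ] m := Filter.Eventually.of_forall hmnonneg
  have lc1 : ∫⁻ ω, ENNReal.ofReal (X i0 ω) = ∫⁻ t in Set.Ioi 0, F t :=
    lintegral_eq_lintegral_meas_lt ℙ hX0nn (hmeas i0).aemeasurable
  have lc2 : ∫⁻ ω, ENNReal.ofReal (m ω) = ∫⁻ t in Set.Ioi 0, ℙ {ω | t < m ω} :=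
    lintegral_eq_lintegral_meas_lt ℙ hmnn hmmble.aemeasurable
  -- change of variables: ∫⁻ t in Ioi 0, F (d * t) = (1/d) * ∫⁻ t in Ioi 0, F t
  have hd0 : (0:ℝ) < (d:ℝ) := Nat.cast_pos.mpr hd
  set G : ℝ → ENNReal := (Set.Ioi (0:ℝ)).indicator F with hG
  have hGmble : Measurable G := hFmble.indicator measurableSet_Ioi
  have cov : ∫⁻ t in Set.Ioi (0:ℝ), F ((d:ℝ) * t) = ENNReal.ofReal (1/(d:ℝ)) * ∫⁻ t in Set.Ioi (0:ℝ), F t := by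
    have e1 : ∫⁻ t in Set.Ioi (0:ℝ), F ((d:ℝ) * t) = ∫⁻ t, G ((d:ℝ) * t) := by
      rw [← lintegral_indicator measurableSet_Ioi]
      congr 1
      ext t
      by_cases ht : t ∈ Set.Ioi (0:ℝ)
      · rw [Set.indicator_of_mem ht, hG, Set.indicator_of_mem (by exact mul_pos hd0 ht)]
      · rw [Set.indicator_of_notMem ht, hG, Set.indicator_of_notMem]
        simp only [Set.mem_Ioi, not_lt] at ht ⊢
        exact mul_nonpos_of_nonneg_of_nonpos hd0.le ht
    have e2 : ∫⁻ t, G ((d:ℝ) * t) = ∫⁻ y, G y ∂(Measure.map ((d:ℝ) * ·) volume) :=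
      (lintegral_map hGmble (measurable_const_mul _)).symm
    rw [e1, e2, Real.map_volume_mul_left hd0.ne', lintegral_smul_measure,
      ← lintegral_indicator measurableSet_Ioi]
    congr 1
    rw [abs_of_pos (by positivity), one_div]
  -- main chain of inequalities in ENNReal
  have key : ENNReal.ofReal (1/(d:ℝ)) * ∫⁻ ω, ENNReal.ofReal (X i0 ω) ≤ ∫⁻ ω, ENNReal.ofReal (m ω) := by
    rw [lc1, lc2, ← cov]
    apply lintegral_mono_ae
    filter_upwards [self_mem_ae_restrict (measurableSet_Ioi : MeasurableSet (Set.Ioi (0:ℝ)))] with t ht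
    rw [hprod t]
    exact hpow t (le_of_lt ht) d hd
  -- finiteness
  have hfin1 : ∫⁻ ω, ENNReal.ofReal (X i0 ω) ≠ ⊤ := hint.lintegral_lt_top.ne
  have hfin2 : ∫⁻ ω, ENNReal.ofReal (m ω) ≠ ⊤ := by
    refine (lt_of_le_of_lt (lintegral_mono fun ω => ?_) hint.lintegral_lt_top).ne
    exact ENNReal.ofReal_le_ofReal (ciInf_le (Set.finite_range _).bddBelow i0)
  -- convert to real integrals
  rw [integral_eq_lintegral_of_nonneg_ae hX0nn (hmeas i0).aestronglyMeasurable,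
    integral_eq_lintegral_of_nonneg_ae hmnn hmmble.aestronglyMeasurable]
  have := ENNReal.toReal_mono hfin2 key
  rwa [ENNReal.toReal_mul, ENNReal.toReal_ofReal (by positivity)] at this
end

section
/- If X is a nonnegative random variable that is New-Worse-than-Used (NWU), i.e., its survival function satisfies F̄(t₁+t₂) ≥ F̄(t₁)·F̄(t₂) for all t₁,t₂ ≥ 0, and X₁,...,X_d are i.i.d. copies of X, then E[min{X₁,...,X_d}] ≤ (1/d)·E[X]. -/
open MeasureTheory ProbabilityTheory Set

lemma lintegral_Ioi_comp_mul_left (g : ℝ → ENNReal) (hg : Measurable g) {c : ℝ} (hc : 0 < c) :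
    ∫⁻ x in Ioi (0:ℝ), g (c * x) = ENNReal.ofReal c⁻¹ * ∫⁻ y in Ioi (0:ℝ), g y := by
  have hmeas : Measurable fun x : ℝ => c * x := measurable_const_mul c
  have hpre : (fun x : ℝ => c * x) ⁻¹' Ioi 0 = Ioi 0 := by
    ext x; simp [mul_pos_iff_of_pos_left, hc]
  have hmap : Measure.map (fun x : ℝ => c * x) (volume.restrict (Ioi 0))
      = (ENNReal.ofReal c⁻¹) • volume.restrict (Ioi 0) := by
    rw [← hpre, ← Measure.restrict_map hmeas measurableSet_Ioi,
      Real.map_volume_mul_left (ne_of_gt hc), Measure.restrict_smul, hpre,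
      abs_of_pos (inv_pos.mpr hc)]
  calc ∫⁻ x in Ioi (0:ℝ), g (c * x)
      = ∫⁻ y, g y ∂(Measure.map (fun x : ℝ => c * x) (volume.restrict (Ioi 0))) :=
        (lintegral_map hg hmeas).symm
    _ = ENNReal.ofReal c⁻¹ * ∫⁻ y in Ioi (0:ℝ), g y := by rw [hmap]; simp [lintegral_smul_measure]

/-- If `X 0, …, X (d-1)` are i.i.d. nonnegative random variables whose common
survival function is NWU, then `E[min_i X i] ≤ (1/d) E[X]`. -/
theorem nwu_min_expectation_le {Ω : Type*} [MeasureSpace Ω]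
    [IsProbabilityMeasure (ℙ : Measure Ω)]
    (d : ℕ) (hd : 0 < d) (X : Fin d → Ω → ℝ)
    (hmeas : ∀ i, Measurable (X i))
    (hnonneg : ∀ i ω, 0 ≤ X i ω)
    (hint : Integrable (X ⟨0, hd⟩))
    (hiid : iIndepFun X ℙ)
    (hid : ∀ i, IdentDistrib (X i) (X ⟨0, hd⟩) ℙ ℙ)
    (hNWU : ∀ t₁ t₂ : ℝ, 0 ≤ t₁ → 0 ≤ t₂ →
      (ℙ {ω | X ⟨0, hd⟩ ω > t₁}).toReal * (ℙ {ω | X ⟨0, hd⟩ ω > t₂}).toReal ≤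
        (ℙ {ω | X ⟨0, hd⟩ ω > t₁ + t₂}).toReal) :
    ∫ ω, ⨅ i, X i ω ≤ (1 / (d : ℝ)) * ∫ ω, X ⟨0, hd⟩ ω := by
  haveI : Nonempty (Fin d) := ⟨⟨0, hd⟩⟩
  set X0 : Ω → ℝ := X ⟨0, hd⟩ with hX0
  set F : ℝ → ENNReal := fun t => ℙ {ω | X0 ω > t} with hF
  have hFanti : Antitone F := fun s t hst =>
    measure_mono (fun ω h => lt_of_le_of_lt hst h)
  have hFmeas : Measurable F := hFanti.measurable
  have hFne : ∀ t, F t ≠ ⊤ := fun t => measure_ne_top _ _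
  -- NWU in ℝ≥0∞
  have hNWU' : ∀ t₁ t₂ : ℝ, 0 ≤ t₁ → 0 ≤ t₂ → F t₁ * F t₂ ≤ F (t₁ + t₂) := by
    intro t₁ t₂ h₁ h₂
    have := hNWU t₁ t₂ h₁ h₂
    rw [← ENNReal.toReal_mul] at this
    exact (ENNReal.toReal_le_toReal (ENNReal.mul_ne_top (hFne _) (hFne _)) (hFne _)).mp this
  -- (F t)^n ≤ F (n t)
  have hpow : ∀ n : ℕ, 0 < n → ∀ t : ℝ, 0 ≤ t → (F t) ^ n ≤ F (n * t) := by
    intro n hn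
    induction n with
    | zero => omega
    | succ m ih =>
      intro t ht
      rcases Nat.eq_zero_or_pos m with hm | hm
      · subst hm; simp
      · calc F t ^ (m + 1) = F t ^ m * F t := pow_succ _ _
          _ ≤ F (m * t) * F t := mul_le_mul_left (ih hm t ht) _
          _ ≤ F (m * t + t) := hNWU' _ _ (by positivity) ht
          _ = F ((m + 1 : ℕ) * t) := by push_cast; ring_nf
  -- min function
  set m : Ω → ℝ := fun ω => ⨅ i, X i ω with hm
  have hmmeas : Measurable m := Measurable.iInf hmeas
  have hmnonneg : ∀ ω, 0 ≤ m ω := fun ω => le_ciInf fun i => hnonneg i ω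
  have hmle : ∀ ω, m ω ≤ X0 ω := fun ω => ciInf_le (Set.Finite.bddBelow (finite_range _)) _
  have hmint : Integrable m := by
    refine Integrable.mono' hint hmmeas.aestronglyMeasurable ?_
    filter_upwards with ω
    rw [Real.norm_eq_abs, abs_of_nonneg (hmnonneg ω)]
    exact hmle ω
  -- survival of min
  have hmin_surv : ∀ t : ℝ, 0 ≤ t → ℙ {ω | t < m ω} = (F t) ^ d := by
    intro t ht
    have hset : {ω | t < m ω} = ⋂ i, X i ⁻¹' Ioi t := by
      ext ω
      simp only [mem_setOf_eq, mem_iInter, mem_preimage, mem_Ioi, hm]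
      obtain ⟨i0, hi0⟩ := Finite.exists_min (fun i => X i ω)
      have heq : (⨅ i, X i ω) = X i0 ω :=
        le_antisymm (ciInf_le (Set.Finite.bddBelow (finite_range _)) i0) (le_ciInf hi0)
      rw [heq]
      exact ⟨fun h i => lt_of_lt_of_le h (hi0 i), fun h => h i0⟩
    rw [hset, hiid.meas_iInter (fun i => ⟨Ioi t, measurableSet_Ioi, rfl⟩)]
    have : ∀ i, ℙ (X i ⁻¹' Ioi t) = F t := by
      intro i
      have := (hid i).measure_mem_eq (measurableSet_Ioi (a := t))
      simpa [hF, Set.preimage, Set.mem_Ioi] using this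
    simp [this, Finset.prod_const, Finset.card_univ]
  -- lintegral expressions
  have hMeq : ∫⁻ ω, ENNReal.ofReal (m ω) ∂ℙ = ∫⁻ t in Ioi (0:ℝ), ℙ {ω | t < m ω} :=
    lintegral_eq_lintegral_meas_lt ℙ (Filter.Eventually.of_forall hmnonneg)
      hmmeas.aemeasurable
  have hLeq : ∫⁻ ω, ENNReal.ofReal (X0 ω) ∂ℙ = ∫⁻ t in Ioi (0:ℝ), F t :=
    lintegral_eq_lintegral_meas_lt ℙ (Filter.Eventually.of_forall (hnonneg _))
      (hmeas _).aemeasurable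
  set L : ENNReal := ∫⁻ ω, ENNReal.ofReal (X0 ω) ∂ℙ with hLdef
  have hLne : L ≠ ⊤ := by
    have := hint.2
    rw [hasFiniteIntegral_iff_norm] at this
    refine ne_of_lt (lt_of_le_of_lt (lintegral_mono fun ω => ?_) this)
    rw [Real.norm_eq_abs, abs_of_nonneg (hnonneg _ ω)]
  -- the key bound in ℝ≥0∞
  have hdpos : (0:ℝ) < d := Nat.cast_pos.mpr hd
  have hkey : ∫⁻ ω, ENNReal.ofReal (m ω) ∂ℙ ≤ ENNReal.ofReal (1 / (d:ℝ)) * L := by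
    rw [hMeq]
    calc ∫⁻ t in Ioi (0:ℝ), ℙ {ω | t < m ω}
        ≤ ∫⁻ t in Ioi (0:ℝ), F ((d:ℝ) * t) := by
          refine lintegral_mono_ae ?_
          filter_upwards [ae_restrict_mem measurableSet_Ioi] with t ht
          rw [hmin_surv t ht.le]
          exact hpow d hd t ht.le
      _ = ENNReal.ofReal (d:ℝ)⁻¹ * ∫⁻ t in Ioi (0:ℝ), F t :=
          lintegral_Ioi_comp_mul_left F hFmeas hdpos
      _ = ENNReal.ofReal (1 / (d:ℝ)) * L := by rw [one_div, hLeq]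
  -- convert to real integrals
  have hm_int : ∫ ω, m ω = (∫⁻ ω, ENNReal.ofReal (m ω) ∂ℙ).toReal := by
    rw [integral_eq_lintegral_of_nonneg_ae (Filter.Eventually.of_forall hmnonneg)
      hmmeas.aestronglyMeasurable]
  have hX0_int : ∫ ω, X0 ω = L.toReal := by
    rw [hLdef, integral_eq_lintegral_of_nonneg_ae (Filter.Eventually.of_forall (hnonneg _))
      (hmeas _).aestronglyMeasurable]
  rw [hm_int, hX0_int]
  calc (∫⁻ ω, ENNReal.ofReal (m ω) ∂ℙ).toReal
      ≤ (ENNReal.ofReal (1 / (d:ℝ)) * L).toReal :=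
        ENNReal.toReal_mono (ENNReal.mul_ne_top ENNReal.ofReal_ne_top hLne) hkey
    _ = (1 / (d:ℝ)) * L.toReal := by
        rw [ENNReal.toReal_mul, ENNReal.toReal_ofReal (by positivity)]
end

section
/- For a nonnegative NBU random variable X with i.i.d. copies, the quantity d·E[min{X₁,...,X_d}] = d·∫₀^∞ F̄(t)^d dt is nondecreasing in the integer d ≥ 1. -/
open MeasureTheory Set

namespace NBUAux

/-- `M G d = ∫⁻ t in (0,∞), (G t)^d` as a Lebesgue integral. -/
noncomputable def M (G : ℝ → ℝ) (d : ℕ) : ENNReal :=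
  ∫⁻ t in Ioi (0 : ℝ), ENNReal.ofReal (G t ^ d)

variable {G : ℝ → ℝ}

lemma M_anti (h0 : ∀ t, 0 ≤ G t) (h1 : ∀ t, G t ≤ 1) {d e : ℕ} (hde : d ≤ e) :
    M G e ≤ M G d :=
  lintegral_mono fun t =>
    ENNReal.ofReal_le_ofReal (pow_le_pow_of_le_one (h0 t) (h1 t) hde)

/-- Key NBU estimate: the integral of `G^d` over the region where `G < u`
is at most `u^d` times the full integral. -/
lemma keyA (hG : Measurable G) (h0 : ∀ t, 0 ≤ G t) (h1 : ∀ t, G t ≤ 1)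
    (hNBU : ∀ a b : ℝ, 0 ≤ a → 0 ≤ b → G (a + b) ≤ G a * G b)
    (d : ℕ) {u : ℝ} (hu0 : 0 < u) :
    ∫⁻ t in Ioi (0 : ℝ), (if G t < u then ENNReal.ofReal (G t ^ d) else 0)
      ≤ ENNReal.ofReal (u ^ d) * M G d := by
  by_cases hS : ∃ t, 0 < t ∧ G t < u
  · refine ENNReal.le_of_forall_pos_le_add fun ε hε _ => ?_
    set S : Set ℝ := {t : ℝ | 0 < t ∧ G t < u} with hSdef
    have hSne : S.Nonempty := hS
    have hSbdd : BddBelow S := ⟨0, fun t ht => ht.1.le⟩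
    set x := sInf S with hxdef
    have hx0 : 0 ≤ x := le_csInf hSne fun t ht => ht.1.le
    obtain ⟨x', hx'S, hx'lt⟩ : ∃ x' ∈ S, x' < x + (ε : ℝ) := by
      rw [← csInf_lt_iff hSbdd hSne]
      exact lt_add_of_pos_right _ (by exact_mod_cast hε)
    have hxx' : x ≤ x' := csInf_le hSbdd hx'S
    have hx'pos : 0 < x' := hx'S.1
    -- pointwise bound
    have hpt : ∀ t, (Ioi (0 : ℝ)).indicator
        (fun t => if G t < u then ENNReal.ofReal (G t ^ d) else 0) t ≤
        (Icc x x').indicator (fun _ => (1:ENNReal)) t +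
          (Ioi x').indicator (fun t => ENNReal.ofReal (u ^ d * G (t - x') ^ d)) t := by
      intro t
      by_cases ht : t ∈ Ioi (0 : ℝ)
      · rw [indicator_of_mem ht]
        by_cases htu : G t < u
        · rw [if_pos htu]
          have htS : t ∈ S := ⟨ht, htu⟩
          have hxt : x ≤ t := csInf_le hSbdd htS
          by_cases htx' : t ≤ x'
          · have h1' : ENNReal.ofReal (G t ^ d) ≤ (Icc x x').indicator (fun _ => (1:ENNReal)) t := by
              rw [indicator_of_mem (mem_Icc.mpr ⟨hxt, htx'⟩)]
              exact le_of_le_of_eq (le_of_le_of_eq (ENNReal.ofReal_le_ofReal (pow_le_one₀ (h0 t) (h1 t))) ENNReal.ofReal_one) rfl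
              -- ENNReal.ofReal_le_ofReal (pow_le_one₀ (h0 t) (h1 t))
            exact le_add_right h1'
          · push_neg at htx'
            have h2 : G t ≤ u * G (t - x') := by
              have hnbu := hNBU x' (t - x') hx'pos.le (by linarith)
              rw [add_sub_cancel] at hnbu
              calc G t ≤ G x' * G (t - x') := hnbu
                _ ≤ u * G (t - x') :=
                  mul_le_mul_of_nonneg_right hx'S.2.le (h0 _)
            have h3 : G t ^ d ≤ u ^ d * G (t - x') ^ d := by
              calc G t ^ d ≤ (u * G (t - x')) ^ d := pow_le_pow_left₀ (h0 t) h2 d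
                _ = u ^ d * G (t - x') ^ d := mul_pow _ _ _
            have h4 : ENNReal.ofReal (G t ^ d) ≤
                (Ioi x').indicator (fun t => ENNReal.ofReal (u ^ d * G (t - x') ^ d)) t := by
              rw [indicator_of_mem (mem_Ioi.mpr htx')]
              exact ENNReal.ofReal_le_ofReal h3
            exact le_add_left h4
        · rw [if_neg htu]; exact zero_le
      · rw [indicator_of_notMem ht]; exact zero_le
    have hshift : ∫⁻ t in Ioi x', ENNReal.ofReal (G (t - x') ^ d) = M G d := by
      have hmp : MeasurePreserving (fun a : ℝ => a + x') volume volume :=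
        measurePreserving_add_right volume x'
      have := hmp.setLIntegral_comp_preimage_emb (measurableEmbedding_addRight x')
        (fun t => ENNReal.ofReal (G (t - x') ^ d)) (Ioi x')
      rw [← this]
      have hpre : (fun a : ℝ => a + x') ⁻¹' Ioi x' = Ioi 0 := by
        ext a; simp [lt_add_iff_pos_left]
      rw [hpre, M]
      refine lintegral_congr fun a => ?_
      simp [add_sub_cancel_right]
    calc ∫⁻ t in Ioi (0 : ℝ), (if G t < u then ENNReal.ofReal (G t ^ d) else 0)
        = ∫⁻ t, (Ioi (0 : ℝ)).indicator
            (fun t => if G t < u then ENNReal.ofReal (G t ^ d) else 0) t := by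
          rw [lintegral_indicator measurableSet_Ioi]
      _ ≤ ∫⁻ t, ((Icc x x').indicator (fun _ => (1:ENNReal)) t +
            (Ioi x').indicator (fun t => ENNReal.ofReal (u ^ d * G (t - x') ^ d)) t) :=
          lintegral_mono hpt
      _ = (∫⁻ t, (Icc x x').indicator (fun _ => (1:ENNReal)) t) +
            ∫⁻ t, (Ioi x').indicator (fun t => ENNReal.ofReal (u ^ d * G (t - x') ^ d)) t := by
          rw [lintegral_add_left]
          exact measurable_const.indicator measurableSet_Icc
      _ ≤ (ε : ENNReal) + ENNReal.ofReal (u ^ d) * M G d := by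
          gcongr
          · rw [lintegral_indicator measurableSet_Icc, setLIntegral_const, one_mul,
              Real.volume_Icc]
            rw [← ENNReal.ofReal_coe_nnreal]
            exact ENNReal.ofReal_le_ofReal (by linarith)
          · rw [lintegral_indicator measurableSet_Ioi]
            refine le_of_eq ?_
            calc ∫⁻ t in Ioi x', ENNReal.ofReal (u ^ d * G (t - x') ^ d)
                = ∫⁻ t in Ioi x', ENNReal.ofReal (u ^ d) * ENNReal.ofReal (G (t - x') ^ d) := by
                  refine lintegral_congr fun t => ?_
                  rw [ENNReal.ofReal_mul (pow_nonneg hu0.le d)]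
              _ = ENNReal.ofReal (u ^ d) * ∫⁻ t in Ioi x', ENNReal.ofReal (G (t - x') ^ d) := by
                  rw [lintegral_const_mul]
                  exact (ENNReal.measurable_ofReal.comp
                    (((hG.comp (measurable_id.sub measurable_const)).pow measurable_const)))
              _ = ENNReal.ofReal (u ^ d) * M G d := by rw [hshift]
      _ = ENNReal.ofReal (u ^ d) * M G d + ε := add_comm _ _
  · push_neg at hS
    have : ∫⁻ t in Ioi (0 : ℝ), (if G t < u then ENNReal.ofReal (G t ^ d) else 0) =
        ∫⁻ _ in Ioi (0 : ℝ), (0 : ENNReal) := by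
      refine setLIntegral_congr_fun measurableSet_Ioi ?_
      intro t ht
      beta_reduce
      rw [if_neg (not_lt.mpr (hS t ht))]
    rw [this, lintegral_zero]
    exact zero_le


lemma step (hG : Measurable G) (h0 : ∀ t, 0 ≤ G t) (h1 : ∀ t, G t ≤ 1)
    (hNBU : ∀ a b : ℝ, 0 ≤ a → 0 ≤ b → G (a + b) ≤ G a * G b)
    (hfin : M G 1 ≠ ⊤) {d : ℕ} (hd : 1 ≤ d) :
    (d : ENNReal) * M G d ≤ ((d : ENNReal) + 1) * M G (d + 1) := by
  have hMd_fin : M G d ≠ ⊤ := ne_top_of_le_ne_top hfin (M_anti h0 h1 hd)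
  set D : ENNReal := ∫⁻ t in Ioi (0 : ℝ), ENNReal.ofReal (G t ^ d * (1 - G t)) with hDdef
  have hsplit : M G d = M G (d + 1) + D := by
    rw [M, M, hDdef, ← lintegral_add_left
      (show Measurable fun t => ENNReal.ofReal (G t ^ (d + 1)) from
        ((hG.pow measurable_const).ennreal_ofReal))]
    refine lintegral_congr fun t => ?_
    rw [← ENNReal.ofReal_add (pow_nonneg (h0 t) _)
      (mul_nonneg (pow_nonneg (h0 t) _) (sub_nonneg.mpr (h1 t)))]
    congr 1
    ring
  -- Fubini step
  have hFub : D = ∫⁻ u in Ioo (0 : ℝ) 1,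
      ∫⁻ t in Ioi (0 : ℝ), (if G t < u then ENNReal.ofReal (G t ^ d) else 0) := by
    have hmeas : Measurable (Function.uncurry fun (t u : ℝ) =>
        if G t < u then ENNReal.ofReal (G t ^ d) else 0) := by
      have : Function.uncurry (fun (t u : ℝ) =>
          if G t < u then ENNReal.ofReal (G t ^ d) else 0) =
          fun p : ℝ × ℝ => if G p.1 < p.2 then ENNReal.ofReal (G p.1 ^ d) else 0 := rfl
      rw [this]
      exact Measurable.ite (measurableSet_lt (hG.comp measurable_fst) measurable_snd)
        (ENNReal.measurable_ofReal.comp ((hG.comp measurable_fst).pow measurable_const))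
        measurable_const
    rw [← lintegral_lintegral_swap hmeas.aemeasurable]
    refine setLIntegral_congr_fun measurableSet_Ioi ?_
    intro t _
    have hind : ∀ u : ℝ, (if G t < u then ENNReal.ofReal (G t ^ d) else 0) =
        (Ioi (G t)).indicator (fun _ => ENNReal.ofReal (G t ^ d)) u := by
      intro u
      rw [indicator_apply]
      rfl
    calc ENNReal.ofReal (G t ^ d * (1 - G t))
        = ENNReal.ofReal (G t ^ d) * ENNReal.ofReal (1 - G t) :=
          ENNReal.ofReal_mul (pow_nonneg (h0 t) _)
      _ = ENNReal.ofReal (G t ^ d) * volume (Ioo (G t) 1) := by rw [Real.volume_Ioo]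
      _ = ENNReal.ofReal (G t ^ d) * volume (Ioi (G t) ∩ Ioo 0 1) := by
          have hset : Ioo (G t) 1 = Ioi (G t) ∩ Ioo (0 : ℝ) 1 := by
            ext y
            simp only [mem_Ioo, mem_Ioi, mem_inter_iff]
            constructor
            · rintro ⟨h1', h2'⟩
              exact ⟨h1', lt_of_le_of_lt (h0 t) h1', h2'⟩
            · rintro ⟨h1', _, h3'⟩
              exact ⟨h1', h3'⟩
          rw [hset]
      _ = ∫⁻ u in Ioo (0 : ℝ) 1, (if G t < u then ENNReal.ofReal (G t ^ d) else 0) := by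
          rw [funext hind, lintegral_indicator measurableSet_Ioi, setLIntegral_const,
            Measure.restrict_apply measurableSet_Ioi]
  -- bound D
  have hint1 : IntegrableOn (fun u : ℝ => u ^ d) (Ioo (0 : ℝ) 1) :=
    ((continuous_pow d).integrableOn_Icc).mono_set Ioo_subset_Icc_self
  have hpowint : ∫⁻ u in Ioo (0 : ℝ) 1, ENNReal.ofReal (u ^ d) =
      ENNReal.ofReal (1 / ((d : ℝ) + 1)) := by
    rw [← ofReal_integral_eq_lintegral_ofReal hint1 ?_]
    · congr 1
      rw [← integral_Ioc_eq_integral_Ioo, ← intervalIntegral.integral_of_le zero_le_one,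
        integral_pow]
      simp
    · filter_upwards [ae_restrict_mem measurableSet_Ioo] with u hu
      exact pow_nonneg hu.1.le d
  have hDle : D ≤ ENNReal.ofReal (1 / ((d : ℝ) + 1)) * M G d := by
    rw [hFub, ← hpowint, ← lintegral_mul_const _ (by measurability : Measurable
      (fun u : ℝ => ENNReal.ofReal (u ^ d)))]
    refine lintegral_mono_ae ?_
    filter_upwards [ae_restrict_mem measurableSet_Ioo] with u hu
    exact keyA hG h0 h1 hNBU d hu.1
  have hkey : ((d : ENNReal) + 1) * D ≤ M G d := by
    calc ((d : ENNReal) + 1) * D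
        ≤ ((d : ENNReal) + 1) * (ENNReal.ofReal (1 / ((d : ℝ) + 1)) * M G d) := by gcongr
      _ = (((d : ENNReal) + 1) * ENNReal.ofReal (1 / ((d : ℝ) + 1))) * M G d := by ring
      _ = M G d := by
          have hd1 : ((d : ENNReal) + 1) = ENNReal.ofReal ((d : ℝ) + 1) := by
            rw [ENNReal.ofReal_add (by positivity) zero_le_one, ENNReal.ofReal_natCast,
              ENNReal.ofReal_one]
          rw [hd1, ← ENNReal.ofReal_mul (by positivity)]
          have : ((d : ℝ) + 1) * (1 / ((d : ℝ) + 1)) = 1 := by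
            field_simp
          rw [this, ENNReal.ofReal_one, one_mul]
  have hDfin : ((d : ENNReal) + 1) * D ≠ ⊤ := ne_top_of_le_ne_top hMd_fin hkey
  have hchain : (d : ENNReal) * M G d + ((d : ENNReal) + 1) * D ≤
      ((d : ENNReal) + 1) * M G (d + 1) + ((d : ENNReal) + 1) * D := by
    calc (d : ENNReal) * M G d + ((d : ENNReal) + 1) * D
        ≤ (d : ENNReal) * M G d + M G d := add_le_add_right hkey _
      _ = ((d : ENNReal) + 1) * M G d := by ring
      _ = ((d : ENNReal) + 1) * (M G (d + 1) + D) := by rw [← hsplit]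
      _ = ((d : ENNReal) + 1) * M G (d + 1) + ((d : ENNReal) + 1) * D := by ring
  exact (ENNReal.add_le_add_iff_right hDfin).mp hchain

lemma M_mono (hG : Measurable G) (h0 : ∀ t, 0 ≤ G t) (h1 : ∀ t, G t ≤ 1)
    (hNBU : ∀ a b : ℝ, 0 ≤ a → 0 ≤ b → G (a + b) ≤ G a * G b)
    (hfin : M G 1 ≠ ⊤) {d₁ d₂ : ℕ} (hd₁ : 1 ≤ d₁) (hd : d₁ ≤ d₂) :
    (d₁ : ENNReal) * M G d₁ ≤ (d₂ : ENNReal) * M G d₂ := by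
  induction d₂, hd using Nat.le_induction with
  | base => exact le_rfl
  | succ n hn ih =>
    refine ih.trans ?_
    have := step hG h0 h1 hNBU hfin (hd₁.trans hn)
    push_cast
    exact this

end NBUAux

open NBUAux in
/-- For a survival function `F̄` of a nonnegative NBU random variable with finite mean,
`d · ∫₀^∞ F̄(t)^d dt` (which equals `d · E[min of d i.i.d. copies]`) is nondecreasing
in the integer `d ≥ 1`. -/
theorem nbu_d_times_expected_min_monotone (Fbar : ℝ → ℝ)
    (hrange : ∀ t, 0 ≤ Fbar t ∧ Fbar t ≤ 1)
    (hanti : ∀ s t : ℝ, 0 ≤ s → s ≤ t → Fbar t ≤ Fbar s)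
    (hNBU : ∀ t₁ t₂ : ℝ, 0 ≤ t₁ → 0 ≤ t₂ → Fbar (t₁ + t₂) ≤ Fbar t₁ * Fbar t₂)
    (hint : IntegrableOn Fbar (Ioi 0))
    (d₁ d₂ : ℕ) (hd₁ : 1 ≤ d₁) (hd : d₁ ≤ d₂) :
    (d₁ : ℝ) * ∫ t in Ioi (0 : ℝ), Fbar t ^ d₁ ≤
      (d₂ : ℝ) * ∫ t in Ioi (0 : ℝ), Fbar t ^ d₂ := by
  set G : ℝ → ℝ := fun t => Fbar (max t 0) with hGdef
  have hGanti : Antitone G := fun s t hst =>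
    hanti _ _ (le_max_right s 0) (max_le_max hst le_rfl)
  have hG : Measurable G := hGanti.measurable
  have h0 : ∀ t, 0 ≤ G t := fun t => (hrange _).1
  have h1 : ∀ t, G t ≤ 1 := fun t => (hrange _).2
  have hGF : ∀ t ∈ Ioi (0 : ℝ), G t = Fbar t := by
    intro t ht
    simp only [hGdef]
    rw [max_eq_left (le_of_lt ht)]
  have hNBU' : ∀ a b : ℝ, 0 ≤ a → 0 ≤ b → G (a + b) ≤ G a * G b := by
    intro a b ha hb
    simp only [hGdef, max_eq_left ha, max_eq_left hb, max_eq_left (add_nonneg ha hb)]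
    exact hNBU a b ha hb
  have hfin : M G 1 ≠ ⊤ := by
    have hle : M G 1 ≤ ∫⁻ t in Ioi (0 : ℝ), ‖Fbar t‖₊ := by
      refine lintegral_mono_ae ?_
      filter_upwards [ae_restrict_mem measurableSet_Ioi] with t ht
      rw [pow_one, hGF t ht]
      exact Real.ofReal_le_enorm (Fbar t)
    exact ne_top_of_le_ne_top hint.2.ne hle
  -- identify the Bochner integrals with `M G d`
  have hMeq : ∀ d : ℕ, (∫ t in Ioi (0 : ℝ), Fbar t ^ d) = (M G d).toReal := by
    intro d
    have h₁ : (∫ t in Ioi (0 : ℝ), Fbar t ^ d) = ∫ t in Ioi (0 : ℝ), G t ^ d := by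
      refine setIntegral_congr_fun measurableSet_Ioi fun t ht => ?_
      rw [hGF t ht]
    rw [h₁, M, integral_eq_lintegral_of_nonneg_ae
      (Filter.Eventually.of_forall fun t => pow_nonneg (h0 t) d)
      ((hG.pow measurable_const).aestronglyMeasurable)]
  have hkey : (d₁ : ENNReal) * M G d₁ ≤ (d₂ : ENNReal) * M G d₂ :=
    M_mono hG h0 h1 hNBU' hfin hd₁ hd
  have hfin₂ : (d₂ : ENNReal) * M G d₂ ≠ ⊤ :=
    ENNReal.mul_ne_top (ENNReal.natCast_ne_top d₂)
      (ne_top_of_le_ne_top hfin (M_anti h0 h1 (hd₁.trans hd)))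
  have := ENNReal.toReal_mono hfin₂ hkey
  rw [ENNReal.toReal_mul, ENNReal.toReal_mul] at this
  simp only [ENNReal.toReal_natCast] at this
  rw [hMeq d₁, hMeq d₂]
  exact this
end

section
/- For a nonnegative NWU random variable X with i.i.d. copies, the quantity d·E[min{X₁,...,X_d}] = d·∫₀^∞ F̄(t)^d dt is nonincreasing in the integer d ≥ 1. -/
open MeasureTheory Set
open scoped ENNReal

namespace NWUaux

noncomputable def T (G : ℝ → ℝ) (y : ℝ) : ℝ≥0∞ := volume {t : ℝ | 0 < t ∧ y < G t}

theorem T_meas {G : ℝ → ℝ} (hG : Measurable G) : Measurable (T G) := by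
  have hA : MeasurableSet {p : ℝ × ℝ | 0 < p.2 ∧ p.1 < G p.2} :=
    (measurableSet_lt measurable_const measurable_snd).inter
      (measurableSet_lt measurable_fst (hG.comp measurable_snd))
  have h : T G = fun y => ∫⁻ t, Set.indicator {p : ℝ × ℝ | 0 < p.2 ∧ p.1 < G p.2} 1 (y, t) := by
    funext y
    have hsec : MeasurableSet {t : ℝ | 0 < t ∧ y < G t} :=
      (measurableSet_lt measurable_const measurable_id).inter
        (measurableSet_lt measurable_const hG)
    rw [T, ← lintegral_indicator_one hsec]
    refine lintegral_congr fun t => ?_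
    by_cases ht : 0 < t ∧ y < G t <;> simp [Set.indicator, ht]
  rw [h]
  exact Measurable.lintegral_prod_right' ((measurable_indicator_const_iff 1).mpr hA)

theorem lint_pow (c a b : ℝ) (h0 : 0 ≤ a) (hab : a ≤ b) (hc : 0 ≤ c) (k : ℕ) :
    ∫⁻ z in Ioo a b, ENNReal.ofReal (c * z ^ k) =
      ENNReal.ofReal (c * ((b ^ (k+1) - a ^ (k+1)) / (k+1))) := by
  have hfi : IntegrableOn (fun z : ℝ => c * z ^ k) (Ioo a b) :=
    (integrableOn_Ioc_iff_integrableOn_Ioo).mp ((continuous_const.mul (continuous_pow k)).integrableOn_Ioc)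
  have hnn : 0 ≤ᵐ[volume.restrict (Ioo a b)] fun z : ℝ => c * z ^ k := by
    rw [Filter.EventuallyLE, ae_restrict_iff' measurableSet_Ioo]
    filter_upwards with z hz
    have : (0:ℝ) ≤ z := le_trans h0 hz.1.le
    positivity
  rw [← ofReal_integral_eq_lintegral_ofReal hfi hnn]
  congr 1
  rw [← integral_Ioc_eq_integral_Ioo, ← intervalIntegral.integral_of_le hab,
    intervalIntegral.integral_const_mul, integral_pow]

theorem lint_scale (f : ℝ → ℝ≥0∞) (hf : Measurable f) {z : ℝ} (hz : 0 < z) :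
    ∫⁻ u in Ioo (0:ℝ) z, f u = ENNReal.ofReal z * ∫⁻ y in Ioo (0:ℝ) 1, f (z * y) := by
  have hpre : (fun y : ℝ => z * y) ⁻¹' (Ioo (0:ℝ) z) = Ioo (0:ℝ) 1 := by
    ext y
    simp only [mem_preimage, mem_Ioo]
    constructor
    · rintro ⟨h1, h2⟩
      constructor
      · by_contra h
        push_neg at h
        nlinarith
      · nlinarith
    · rintro ⟨h1, h2⟩
      exact ⟨mul_pos hz h1, by nlinarith⟩
  have hmap : ∫⁻ y in Ioo (0:ℝ) 1, f (z * y) =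
      ∫⁻ u, f u ∂((volume.restrict (Ioo (0:ℝ) 1)).map (fun y => z * y)) := by
    rw [lintegral_map hf (measurable_const_mul z)]
  rw [hmap, ← hpre, ← Measure.restrict_map (measurable_const_mul z) measurableSet_Ioo,
    Real.map_volume_mul_left (ne_of_gt hz)]
  rw [Measure.restrict_smul, lintegral_smul_measure, abs_of_pos (inv_pos.mpr hz), smul_eq_mul,
    ← mul_assoc, ← ENNReal.ofReal_mul hz.le, mul_inv_cancel₀ (ne_of_gt hz),
    ENNReal.ofReal_one, one_mul]

theorem T_superadd {G : ℝ → ℝ} (hmono : Antitone G)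
    (hnwu : ∀ s t : ℝ, 0 ≤ s → 0 ≤ t → G s * G t ≤ G (s + t))
    {y z : ℝ} (hy : y ∈ Ioo (0:ℝ) 1) (hz : z ∈ Ioo (0:ℝ) 1) :
    T G y + T G z ≤ T G (y * z) := by
  set S : ℝ → Set ℝ := fun w => {t : ℝ | 0 < t ∧ w < G t} with hS
  have down : ∀ w s t, s ∈ S w → 0 < t → t ≤ s → t ∈ S w := by
    intro w s t hs ht hts
    exact ⟨ht, lt_of_lt_of_le hs.2 (hmono hts)⟩
  have memIoc : ∀ w s, s ∈ S w → ENNReal.ofReal s ≤ T G w := by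
    intro w s hs
    have : Ioc 0 s ⊆ S w := fun t ht => down w s t hs ht.1 ht.2
    calc ENNReal.ofReal s = volume (Ioc (0:ℝ) s) := by simp
    _ ≤ T G w := measure_mono this
  have addmem : ∀ s t, s ∈ S y → t ∈ S z → s + t ∈ S (y * z) := by
    intro s t hs ht
    refine ⟨add_pos hs.1 ht.1, ?_⟩
    calc y * z < G s * G t :=
          mul_lt_mul'' hs.2 ht.2 (le_of_lt hy.1) (le_of_lt hz.1)
    _ ≤ G (s + t) := hnwu s t hs.1.le ht.1.le
  have hyz : S y ⊆ S (y * z) := by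
    intro t ht
    refine ⟨ht.1, lt_trans ?_ ht.2⟩
    calc y * z < y * 1 := by nlinarith [hy.1, hz.2]
    _ = y := mul_one y
  have hzz : S z ⊆ S (y * z) := by
    intro t ht
    refine ⟨ht.1, lt_trans ?_ ht.2⟩
    nlinarith [hz.1, hy.2]
  rcases eq_empty_or_nonempty (S y) with hSy | hSy
  · have : T G y = 0 := by show volume (S y) = 0; rw [hSy]; simp
    rw [this, zero_add]
    exact measure_mono hzz
  rcases eq_empty_or_nonempty (S z) with hSz | hSz
  · have : T G z = 0 := by show volume (S z) = 0; rw [hSz]; simp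
    rw [this, add_zero]
    exact measure_mono hyz
  -- unbounded cases
  by_cases hby : BddAbove (S y)
  case neg =>
    have htop : T G (y * z) = ⊤ := by
      by_contra htop
      obtain ⟨s, hsS, hsM⟩ := not_bddAbove_iff.mp hby ((T G (y*z)).toReal)
      have h1 : ENNReal.ofReal s ≤ T G (y*z) := memIoc _ s (hyz hsS)
      have h2 : ENNReal.ofReal s ≤ ENNReal.ofReal ((T G (y*z)).toReal) := by
        rwa [ENNReal.ofReal_toReal htop]
      have := (ENNReal.ofReal_le_ofReal_iff (ENNReal.toReal_nonneg)).mp h2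
      linarith
    simp [htop]
  case pos =>
  by_cases hbz : BddAbove (S z)
  case neg =>
    have htop : T G (y * z) = ⊤ := by
      by_contra htop
      obtain ⟨s, hsS, hsM⟩ := not_bddAbove_iff.mp hbz ((T G (y*z)).toReal)
      have h1 : ENNReal.ofReal s ≤ T G (y*z) := memIoc _ s (hzz hsS)
      have h2 : ENNReal.ofReal s ≤ ENNReal.ofReal ((T G (y*z)).toReal) := by
        rwa [ENNReal.ofReal_toReal htop]
      have := (ENNReal.ofReal_le_ofReal_iff (ENNReal.toReal_nonneg)).mp h2
      linarith
    simp [htop]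
  case pos =>
    set a := sSup (S y) with ha
    set b := sSup (S z) with hb
    obtain ⟨sy, hsy⟩ := hSy
    obtain ⟨sz, hsz⟩ := hSz
    have hapos : 0 < a := lt_of_lt_of_le hsy.1 (le_csSup hby hsy)
    have hbpos : 0 < b := lt_of_lt_of_le hsz.1 (le_csSup hbz hsz)
    have hTy : T G y ≤ ENNReal.ofReal a := by
      show volume (S y) ≤ _
      calc volume (S y) ≤ volume (Ioc 0 a) :=
            measure_mono (fun t ht => ⟨ht.1, le_csSup hby ht⟩)
      _ = ENNReal.ofReal a := by simp
    have hTz : T G z ≤ ENNReal.ofReal b := by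
      show volume (S z) ≤ _
      calc volume (S z) ≤ volume (Ioc 0 b) :=
            measure_mono (fun t ht => ⟨ht.1, le_csSup hbz ht⟩)
      _ = ENNReal.ofReal b := by simp
    have hsub : Ioo 0 (a + b) ⊆ S (y * z) := by
      intro r hr
      set ε := (a + b - r) / 2 with hε
      have hεpos : 0 < ε := by simp only [hε]; linarith [hr.2]
      obtain ⟨s, hsS, hs⟩ := exists_lt_of_lt_csSup ⟨sy, hsy⟩ (show a - ε < a by linarith)
      obtain ⟨t, htS, ht⟩ := exists_lt_of_lt_csSup ⟨sz, hsz⟩ (show b - ε < b by linarith)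
      have : r ≤ s + t := by simp only [hε] at hs ht ⊢; linarith
      exact down _ (s + t) r (addmem s t hsS htS) hr.1 this
    calc T G y + T G z ≤ ENNReal.ofReal a + ENNReal.ofReal b :=
          add_le_add hTy hTz
    _ = ENNReal.ofReal (a + b) := (ENNReal.ofReal_add hapos.le hbpos.le).symm
    _ = volume (Ioo 0 (a + b)) := by simp
    _ ≤ T G (y * z) := measure_mono hsub

noncomputable def Aint (G : ℝ → ℝ) (e : ℕ) : ℝ≥0∞ :=
  ∫⁻ u in Ioo (0:ℝ) 1, ENNReal.ofReal (u ^ e) * T G u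

noncomputable def Dint (G : ℝ → ℝ) (e k : ℕ) : ℝ≥0∞ :=
  ∫⁻ z in Ioo (0:ℝ) 1, ENNReal.ofReal ((k+1 : ℝ) * z ^ k) *
    ∫⁻ u in Ioo (0:ℝ) z, ENNReal.ofReal (u ^ e) * T G u

theorem A_eq {G : ℝ → ℝ} (hG : Measurable G) (hrange : ∀ t, 0 ≤ G t ∧ G t ≤ 1) (e : ℕ) :
    Aint G e = ENNReal.ofReal ((e + 1 : ℝ))⁻¹ * ∫⁻ t in Ioi (0:ℝ), ENNReal.ofReal (G t ^ (e+1)) := by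
  show ∫⁻ u in Ioo (0:ℝ) 1, ENNReal.ofReal (u ^ e) * T G u = _

  have hA : MeasurableSet {p : ℝ × ℝ | p.1 < G p.2} :=
    measurableSet_lt measurable_fst (hG.comp measurable_snd)
  set k : ℝ × ℝ → ℝ≥0∞ :=
    fun p => ENNReal.ofReal (p.1 ^ e) * Set.indicator {p : ℝ × ℝ | p.1 < G p.2} 1 p with hk
  have hkm : Measurable k :=
    ((ENNReal.measurable_ofReal.comp ((measurable_fst).pow_const e))).mul
      ((measurable_indicator_const_iff 1).mpr hA)
  have step1 : ∀ u : ℝ, ENNReal.ofReal (u ^ e) * T G u =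
      ∫⁻ t in Ioi (0:ℝ), k (u, t) := by
    intro u
    have hsu : MeasurableSet {s : ℝ | u < G s} := measurableSet_lt measurable_const hG
    have key : ∫⁻ t in Ioi (0:ℝ), Set.indicator {p : ℝ × ℝ | p.1 < G p.2} (1 : ℝ × ℝ → ℝ≥0∞) (u, t) =
        T G u := by
      have heq : (fun t : ℝ => Set.indicator {p : ℝ × ℝ | p.1 < G p.2} (1 : ℝ × ℝ → ℝ≥0∞) (u, t)) =
          fun t => Set.indicator {s : ℝ | u < G s} (1 : ℝ → ℝ≥0∞) t := by
        funext t
        by_cases h : u < G t <;> simp [Set.indicator, h]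
      rw [heq, lintegral_indicator_one hsu, Measure.restrict_apply hsu, T]
      congr 1
      ext t
      simp only [mem_inter_iff, mem_setOf_eq, mem_Ioi]
      tauto
    calc ENNReal.ofReal (u ^ e) * T G u
        = ENNReal.ofReal (u ^ e) *
          ∫⁻ t in Ioi (0:ℝ), Set.indicator {p : ℝ × ℝ | p.1 < G p.2} (1 : ℝ × ℝ → ℝ≥0∞) (u, t) := by
          rw [key]
      _ = ∫⁻ t in Ioi (0:ℝ), ENNReal.ofReal (u ^ e) *
            Set.indicator {p : ℝ × ℝ | p.1 < G p.2} (1 : ℝ × ℝ → ℝ≥0∞) (u, t) :=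
          (lintegral_const_mul _ (((measurable_indicator_const_iff 1).mpr hA).comp
            measurable_prodMk_left)).symm
  have step3 : ∀ t : ℝ, (∫⁻ u in Ioo (0:ℝ) 1, k (u, t)) =
      ENNReal.ofReal (G t ^ (e+1) / (e+1)) := by
    intro t
    have heq : (fun u : ℝ => k (u, t)) =
        Set.indicator (Iio (G t)) (fun u => ENNReal.ofReal (u ^ e)) := by
      funext u
      by_cases h : u < G t <;> simp [hk, Set.indicator, h]
    rw [heq, lintegral_indicator measurableSet_Iio, Measure.restrict_restrict measurableSet_Iio]
    have hset : Iio (G t) ∩ Ioo (0:ℝ) 1 = Ioo 0 (G t) := by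
      ext u
      simp only [mem_inter_iff, mem_Iio, mem_Ioo]
      constructor
      · rintro ⟨h1, h2, h3⟩; exact ⟨h2, h1⟩
      · rintro ⟨h1, h2⟩
        exact ⟨h2, h1, lt_of_lt_of_le h2 (hrange t).2⟩
    rw [hset]
    have := lint_pow 1 0 (G t) le_rfl (hrange t).1 zero_le_one e
    simpa using this
  calc ∫⁻ u in Ioo (0:ℝ) 1, ENNReal.ofReal (u ^ e) * T G u
      = ∫⁻ u in Ioo (0:ℝ) 1, ∫⁻ t in Ioi (0:ℝ), k (u, t) := by
        exact lintegral_congr fun u => step1 u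
    _ = ∫⁻ t in Ioi (0:ℝ), ∫⁻ u in Ioo (0:ℝ) 1, k (u, t) := by
        exact lintegral_lintegral_swap hkm.aemeasurable
    _ = ∫⁻ t in Ioi (0:ℝ), ENNReal.ofReal (G t ^ (e+1) / (e+1)) :=
        lintegral_congr fun t => step3 t
    _ = ∫⁻ t in Ioi (0:ℝ), ENNReal.ofReal ((e + 1 : ℝ))⁻¹ * ENNReal.ofReal (G t ^ (e+1)) := by
        refine lintegral_congr fun t => ?_
        rw [← ENNReal.ofReal_mul (by positivity)]
        congr 1
        rw [div_eq_inv_mul]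
    _ = ENNReal.ofReal ((e + 1 : ℝ))⁻¹ * ∫⁻ t in Ioi (0:ℝ), ENNReal.ofReal (G t ^ (e+1)) :=
        lintegral_const_mul _ (ENNReal.measurable_ofReal.comp ((hG.pow_const (e+1))))

theorem D_eq {G : ℝ → ℝ} (hG : Measurable G) (e k : ℕ) :
    Dint G e k + Aint G (e+k+1) = Aint G e := by
  have hT := T_meas hG
  have hg : Measurable fun u : ℝ => ENNReal.ofReal (u ^ e) * T G u :=
    (ENNReal.measurable_ofReal.comp (measurable_id.pow_const e)).mul hT
  have hB : MeasurableSet {p : ℝ × ℝ | p.2 < p.1} :=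
    measurableSet_lt measurable_snd measurable_fst
  set K : ℝ × ℝ → ℝ≥0∞ := fun p =>
    ENNReal.ofReal ((k+1 : ℝ) * p.1 ^ k) *
      (Set.indicator {p : ℝ × ℝ | p.2 < p.1} (1 : ℝ × ℝ → ℝ≥0∞) p *
        (ENNReal.ofReal (p.2 ^ e) * T G p.2)) with hK
  have hKm : Measurable K := by
    refine ((ENNReal.measurable_ofReal.comp
      ((measurable_fst.pow_const k).const_mul _))).mul ?_
    exact ((measurable_indicator_const_iff 1).mpr hB).mul
      ((ENNReal.measurable_ofReal.comp (measurable_snd.pow_const e)).mul (hT.comp measurable_snd))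
  -- step 1: Dint as iterated integral of K
  have step1 : Dint G e k = ∫⁻ z in Ioo (0:ℝ) 1, ∫⁻ u in Ioo (0:ℝ) 1, K (z, u) := by
    refine setLIntegral_congr_fun measurableSet_Ioo (fun z hz => ?_)
    have heq : (fun u : ℝ => Set.indicator {p : ℝ × ℝ | p.2 < p.1} (1 : ℝ × ℝ → ℝ≥0∞) (z, u) *
        (ENNReal.ofReal (u ^ e) * T G u)) =
        Set.indicator (Iio z) (fun u => ENNReal.ofReal (u ^ e) * T G u) := by
      funext u
      by_cases h : u < z <;> simp [Set.indicator, h]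
    have hset : Iio z ∩ Ioo (0:ℝ) 1 = Ioo 0 z := by
      ext u
      simp only [mem_inter_iff, mem_Iio, mem_Ioo]
      constructor
      · rintro ⟨h1, h2, h3⟩; exact ⟨h2, h1⟩
      · rintro ⟨h1, h2⟩; exact ⟨h2, h1, lt_trans h2 hz.2⟩
    have hin : ∫⁻ u in Ioo (0:ℝ) z, ENNReal.ofReal (u ^ e) * T G u =
        ∫⁻ u in Ioo (0:ℝ) 1, Set.indicator {p : ℝ × ℝ | p.2 < p.1} (1 : ℝ × ℝ → ℝ≥0∞) (z, u) *
          (ENNReal.ofReal (u ^ e) * T G u) := by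
      rw [heq, lintegral_indicator measurableSet_Iio,
        Measure.restrict_restrict measurableSet_Iio, hset]
    have hm2 : Measurable fun u : ℝ =>
        Set.indicator {p : ℝ × ℝ | p.2 < p.1} (1 : ℝ × ℝ → ℝ≥0∞) (z, u) *
          (ENNReal.ofReal (u ^ e) * T G u) :=
      (((measurable_indicator_const_iff 1).mpr hB).comp measurable_prodMk_left).mul hg
    rw [hin, ← lintegral_const_mul _ hm2]
  -- step 2: swap
  have step2 : ∫⁻ z in Ioo (0:ℝ) 1, ∫⁻ u in Ioo (0:ℝ) 1, K (z, u) =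
      ∫⁻ u in Ioo (0:ℝ) 1, ∫⁻ z in Ioo (0:ℝ) 1, K (z, u) :=
    lintegral_lintegral_swap hKm.aemeasurable
  -- step 3: inner z-integral for fixed u in Ioo 0 1
  have step3 : ∀ u ∈ Ioo (0:ℝ) 1, (∫⁻ z in Ioo (0:ℝ) 1, K (z, u)) =
      ENNReal.ofReal (1 - u ^ (k+1)) * (ENNReal.ofReal (u ^ e) * T G u) := by
    intro u hu
    have heq : (fun z : ℝ => K (z, u)) =
        fun z => Set.indicator (Ioi u) (fun z => ENNReal.ofReal ((k+1 : ℝ) * z ^ k)) z *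
          (ENNReal.ofReal (u ^ e) * T G u) := by
      funext z
      by_cases h : u < z <;> simp [hK, Set.indicator, h, mul_comm, mul_left_comm]
    rw [heq]
    have hw : Measurable fun z : ℝ => ENNReal.ofReal ((k+1 : ℝ) * z ^ k) := by fun_prop
    rw [lintegral_mul_const _ (hw.indicator measurableSet_Ioi)]
    congr 1
    rw [lintegral_indicator measurableSet_Ioi, Measure.restrict_restrict measurableSet_Ioi]
    have hset : Ioi u ∩ Ioo (0:ℝ) 1 = Ioo u 1 := by
      ext z
      simp only [mem_inter_iff, mem_Ioi, mem_Ioo]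
      constructor
      · rintro ⟨h1, h2, h3⟩; exact ⟨h1, h3⟩
      · rintro ⟨h1, h2⟩; exact ⟨h1, lt_trans hu.1 h1, h2⟩
    rw [hset, lint_pow _ _ _ hu.1.le hu.2.le (by positivity) k]
    congr 1
    field_simp
    rw [one_pow]
  -- assemble
  have stepA : Aint G (e+k+1) =
      ∫⁻ u in Ioo (0:ℝ) 1, ENNReal.ofReal (u ^ (e+k+1)) * T G u := rfl
  rw [Dint] at step1 ⊢
  rw [step1, step2]
  have hph : Measurable fun u : ℝ => ENNReal.ofReal (u ^ (e+k+1)) := by fun_prop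
  rw [stepA, ← lintegral_add_right (g := fun u : ℝ => ENNReal.ofReal (u ^ (e+k+1)) * T G u) _ (hph.mul hT)]
  refine setLIntegral_congr_fun measurableSet_Ioo (fun u hu => ?_)
  rw [step3 u hu]
  have h1 : (0:ℝ) ≤ 1 - u ^ (k+1) := by nlinarith [pow_le_one₀ hu.1.le hu.2.le (n := k+1)]
  calc ENNReal.ofReal (1 - u ^ (k+1)) * (ENNReal.ofReal (u ^ e) * T G u) +
        ENNReal.ofReal (u ^ (e+k+1)) * T G u
      = (ENNReal.ofReal ((1 - u ^ (k+1)) * u ^ e) + ENNReal.ofReal (u ^ (e+k+1))) * T G u := by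
        rw [ENNReal.ofReal_mul h1, add_mul, mul_assoc]
    _ = ENNReal.ofReal (u ^ e) * T G u := by
        congr 1
        rw [← ENNReal.ofReal_add (by nlinarith [pow_nonneg hu.1.le e]) (pow_nonneg hu.1.le _)]
        congr 1
        have : u ^ (e+k+1) = u ^ e * u ^ (k+1) := by ring
        rw [this]
        ring

theorem D_ge {G : ℝ → ℝ} (hG : Measurable G) (hmono : Antitone G)
    (hnwu : ∀ s t : ℝ, 0 ≤ s → 0 ≤ t → G s * G t ≤ G (s + t)) (e k : ℕ) :
    ENNReal.ofReal (((k:ℝ)+1)/((e:ℝ)+(k:ℝ)+2)) * Aint G e +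
      ENNReal.ofReal (((k:ℝ)+1)/((e:ℝ)+1)) * Aint G (e+k+1) ≤ Dint G e k := by
  have hT := T_meas hG
  have hg : Measurable fun u : ℝ => ENNReal.ofReal (u ^ e) * T G u := by
    have h1 : Measurable fun u : ℝ => ENNReal.ofReal (u ^ e) := by fun_prop
    exact h1.mul hT
  -- inner bound for each z in Ioo 0 1
  have inner_ge : ∀ z ∈ Ioo (0:ℝ) 1,
      ENNReal.ofReal (z ^ (e+1)) * Aint G e +
        ENNReal.ofReal (z ^ (e+1) / (e+1)) * T G z ≤
      ∫⁻ u in Ioo (0:ℝ) z, ENNReal.ofReal (u ^ e) * T G u := by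
    intro z hz
    have hdiv : Measurable fun u : ℝ => ENNReal.ofReal (u ^ e) * T G (u / z) := by
      have h1 : Measurable fun u : ℝ => ENNReal.ofReal (u ^ e) := by fun_prop
      exact h1.mul (hT.comp (measurable_id.div_const z))
    have hsum : Measurable fun u : ℝ =>
        ENNReal.ofReal (u ^ e) * T G (u / z) + ENNReal.ofReal (u ^ e) * T G z := by
      have h1 : Measurable fun u : ℝ => ENNReal.ofReal (u ^ e) := by fun_prop
      exact hdiv.add (h1.mul measurable_const)
    have hstep : ∫⁻ u in Ioo (0:ℝ) z,
        (ENNReal.ofReal (u ^ e) * T G (u / z) + ENNReal.ofReal (u ^ e) * T G z) ≤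
        ∫⁻ u in Ioo (0:ℝ) z, ENNReal.ofReal (u ^ e) * T G u := by
      refine setLIntegral_mono hg (fun u hu => ?_)
      rw [← mul_add]
      refine mul_le_mul_right ?_ _
      have huz : u / z ∈ Ioo (0:ℝ) 1 := by
        constructor
        · exact div_pos hu.1 hz.1
        · rw [div_lt_one hz.1]; exact hu.2
      have := T_superadd hmono hnwu huz hz
      rwa [div_mul_cancel₀ u (ne_of_gt hz.1)] at this
    refine le_trans (le_of_eq ?_) hstep
    have hsplit : ∫⁻ u in Ioo (0:ℝ) z,
        (ENNReal.ofReal (u ^ e) * T G (u / z) + ENNReal.ofReal (u ^ e) * T G z) =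
        (∫⁻ u in Ioo (0:ℝ) z, ENNReal.ofReal (u ^ e) * T G (u / z)) +
          ∫⁻ u in Ioo (0:ℝ) z, ENNReal.ofReal (u ^ e) * T G z :=
      lintegral_add_left hdiv _
    have hfirst : ∫⁻ u in Ioo (0:ℝ) z, ENNReal.ofReal (u ^ e) * T G (u / z) =
        ENNReal.ofReal (z ^ (e+1)) * Aint G e := by
      rw [lint_scale _ hdiv hz.1]
      have hcong : ∫⁻ y in Ioo (0:ℝ) 1, ENNReal.ofReal ((z * y) ^ e) * T G (z * y / z) =
          ∫⁻ y in Ioo (0:ℝ) 1, ENNReal.ofReal (z ^ e) * (ENNReal.ofReal (y ^ e) * T G y) := by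
        refine lintegral_congr fun y => ?_
        rw [mul_pow, ENNReal.ofReal_mul (pow_nonneg hz.1.le e), mul_assoc,
          mul_div_cancel_left₀ y (ne_of_gt hz.1)]
      rw [hcong, lintegral_const_mul _ hg, ← mul_assoc, ← ENNReal.ofReal_mul hz.1.le,
        show z * z ^ e = z ^ (e+1) by ring]
      rfl
    have hsecond : ∫⁻ u in Ioo (0:ℝ) z, ENNReal.ofReal (u ^ e) * T G z =
        ENNReal.ofReal (z ^ (e+1) / (e+1)) * T G z := by
      have h1 : Measurable fun u : ℝ => ENNReal.ofReal (u ^ e) := by fun_prop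
      rw [lintegral_mul_const _ h1]
      congr 1
      have := lint_pow 1 0 z le_rfl hz.1.le zero_le_one e
      simp only [one_mul, zero_pow, Nat.succ_ne_zero, ne_eq, not_false_iff, sub_zero] at this
      rw [← this]
    rw [hsplit, hfirst, hsecond]
  -- outer assembly
  have houter : ∀ z ∈ Ioo (0:ℝ) 1,
      ENNReal.ofReal ((k+1 : ℝ) * z ^ (e+k+1)) * Aint G e +
        ENNReal.ofReal (((k:ℝ)+1)/((e:ℝ)+1)) * (ENNReal.ofReal (z ^ (e+k+1)) * T G z) ≤
      ENNReal.ofReal ((k+1 : ℝ) * z ^ k) *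
        ∫⁻ u in Ioo (0:ℝ) z, ENNReal.ofReal (u ^ e) * T G u := by
    intro z hz
    have hz0 : (0:ℝ) ≤ z := hz.1.le
    refine le_trans (le_of_eq ?_) (mul_le_mul_right (inner_ge z hz) _)
    rw [mul_add]
    congr 1
    · rw [← mul_assoc, ← ENNReal.ofReal_mul (by positivity : (0:ℝ) ≤ (k+1 : ℝ) * z ^ k)]
      congr 2
      ring
    · rw [← mul_assoc, ← mul_assoc,
        ← ENNReal.ofReal_mul (by positivity : (0:ℝ) ≤ ((k:ℝ)+1)/((e:ℝ)+1)),
        ← ENNReal.ofReal_mul (by positivity : (0:ℝ) ≤ (k+1 : ℝ) * z ^ k)]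
      congr 2
      have hne : (e : ℝ) + 1 ≠ 0 := by positivity
      field_simp
      ring
  -- integrate the outer bound
  have hTz : Measurable fun z : ℝ => ENNReal.ofReal (z ^ (e+k+1)) * T G z := by
    have h1 : Measurable fun z : ℝ => ENNReal.ofReal (z ^ (e+k+1)) := by fun_prop
    exact h1.mul hT
  have hcoef : ∫⁻ z in Ioo (0:ℝ) 1, ENNReal.ofReal ((k+1 : ℝ) * z ^ (e+k+1)) =
      ENNReal.ofReal (((k:ℝ)+1)/((e:ℝ)+(k:ℝ)+2)) := by
    rw [lint_pow ((k:ℝ)+1) 0 1 le_rfl zero_le_one (by positivity) (e+k+1)]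
    congr 1
    rw [one_pow, zero_pow (by omega : e+k+1+1 ≠ 0), sub_zero, mul_one_div]
    push_cast
    ring_nf
  calc ENNReal.ofReal (((k:ℝ)+1)/((e:ℝ)+(k:ℝ)+2)) * Aint G e +
        ENNReal.ofReal (((k:ℝ)+1)/((e:ℝ)+1)) * Aint G (e+k+1)
      = ∫⁻ z in Ioo (0:ℝ) 1, (ENNReal.ofReal ((k+1 : ℝ) * z ^ (e+k+1)) * Aint G e +
          ENNReal.ofReal (((k:ℝ)+1)/((e:ℝ)+1)) * (ENNReal.ofReal (z ^ (e+k+1)) * T G z)) := by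
        rw [lintegral_add_left (by fun_prop : Measurable fun z : ℝ =>
          ENNReal.ofReal ((k+1 : ℝ) * z ^ (e+k+1)) * Aint G e)]
        congr 1
        · rw [lintegral_mul_const _ (by fun_prop : Measurable fun z : ℝ =>
            ENNReal.ofReal ((k+1 : ℝ) * z ^ (e+k+1))), hcoef]
        · rw [lintegral_const_mul _ hTz]
          rfl
    _ ≤ ∫⁻ z in Ioo (0:ℝ) 1, ENNReal.ofReal ((k+1 : ℝ) * z ^ k) *
          ∫⁻ u in Ioo (0:ℝ) z, ENNReal.ofReal (u ^ e) * T G u :=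
        setLIntegral_mono' measurableSet_Ioo houter
    _ = Dint G e k := rfl

end NWUaux

open NWUaux

/-- For a survival function `F̄` of a nonnegative NWU random variable with finite mean,
`d · ∫₀^∞ F̄(t)^d dt` (which equals `d · E[min of d i.i.d. copies]`) is nonincreasing
in the integer `d ≥ 1`. -/
theorem nwu_d_times_expected_min_antitone (Fbar : ℝ → ℝ)
    (hrange : ∀ t, 0 ≤ Fbar t ∧ Fbar t ≤ 1)
    (hanti : ∀ s t : ℝ, 0 ≤ s → s ≤ t → Fbar t ≤ Fbar s)
    (hNWU : ∀ t₁ t₂ : ℝ, 0 ≤ t₁ → 0 ≤ t₂ → Fbar t₁ * Fbar t₂ ≤ Fbar (t₁ + t₂))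
    (hint : IntegrableOn Fbar (Ioi 0))
    (d₁ d₂ : ℕ) (hd₁ : 1 ≤ d₁) (hd : d₁ ≤ d₂) :
    (d₂ : ℝ) * ∫ t in Ioi (0 : ℝ), Fbar t ^ d₂ ≤
      (d₁ : ℝ) * ∫ t in Ioi (0 : ℝ), Fbar t ^ d₁ := by
  -- globalized survival function
  set G : ℝ → ℝ := fun t => Fbar (max t 0) with hGdef
  have hmono : Antitone G := by
    intro s t hst
    exact hanti (max s 0) (max t 0) (le_max_right s 0) (max_le_max hst le_rfl)
  have hG : Measurable G := hmono.measurable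
  have hrangeG : ∀ t, 0 ≤ G t ∧ G t ≤ 1 := fun t => hrange (max t 0)
  have hnwuG : ∀ s t : ℝ, 0 ≤ s → 0 ≤ t → G s * G t ≤ G (s + t) := by
    intro s t hs ht
    have h1 : max s 0 = s := max_eq_left hs
    have h2 : max t 0 = t := max_eq_left ht
    have h3 : max (s + t) 0 = s + t := max_eq_left (by linarith)
    simp only [hGdef, h1, h2, h3]
    exact hNWU s t hs ht
  have hGeq : ∀ t ∈ Ioi (0:ℝ), G t = Fbar t := by
    intro t ht
    simp only [hGdef, max_eq_left (le_of_lt (show (0:ℝ) < t from ht))]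
  -- integrability of powers
  have hintG : IntegrableOn G (Ioi 0) := by
    refine hint.congr_fun (fun t ht => (hGeq t ht).symm) measurableSet_Ioi
  have hintpow : ∀ d : ℕ, 1 ≤ d → IntegrableOn (fun t => G t ^ d) (Ioi 0) := by
    intro d hd1
    refine Integrable.mono hintG ((hG.pow_const d).aestronglyMeasurable.restrict) ?_
    refine ae_of_all _ fun t => ?_
    rw [Real.norm_eq_abs, Real.norm_eq_abs, abs_of_nonneg (pow_nonneg (hrangeG t).1 d),
      abs_of_nonneg (hrangeG t).1]
    calc G t ^ d ≤ G t ^ 1 := pow_le_pow_of_le_one (hrangeG t).1 (hrangeG t).2 hd1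
    _ = G t := pow_one _
  -- lintegral vs integral
  have hJ : ∀ d : ℕ, 1 ≤ d →
      ENNReal.ofReal (∫ t in Ioi (0:ℝ), G t ^ d) =
        ∫⁻ t in Ioi (0:ℝ), ENNReal.ofReal (G t ^ d) := by
    intro d hd1
    exact ofReal_integral_eq_lintegral_ofReal (hintpow d hd1)
      (ae_of_all _ fun t => pow_nonneg (hrangeG t).1 d)
  have hIeq : ∀ d : ℕ, (∫ t in Ioi (0:ℝ), Fbar t ^ d) = ∫ t in Ioi (0:ℝ), G t ^ d := by
    intro d
    refine setIntegral_congr_fun measurableSet_Ioi fun t ht => ?_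
    rw [hGeq t ht]
  -- trivial case d₁ = d₂
  rcases eq_or_lt_of_le hd with rfl | hlt
  · exact le_refl _
  -- main case
  · set e : ℕ := d₁ - 1 with he
    set k : ℕ := d₂ - d₁ - 1 with hk
    have hed : e + 1 = d₁ := by omega
    have hekd : e + k + 2 = d₂ := by omega
    have hekd1 : e + k + 1 + 1 = d₂ := by omega
    set I₁ : ℝ := ∫ t in Ioi (0:ℝ), G t ^ d₁ with hI1
    set I₂ : ℝ := ∫ t in Ioi (0:ℝ), G t ^ d₂ with hI2
    have hI1nn : 0 ≤ I₁ := setIntegral_nonneg measurableSet_Ioi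
      (fun t _ => pow_nonneg (hrangeG t).1 d₁)
    have hI2nn : 0 ≤ I₂ := setIntegral_nonneg measurableSet_Ioi
      (fun t _ => pow_nonneg (hrangeG t).1 d₂)
    -- A values
    have hA1 : Aint G e = ENNReal.ofReal ((d₁ : ℝ))⁻¹ * ENNReal.ofReal I₁ := by
      rw [A_eq hG hrangeG e, hJ d₁ hd₁, hed]
      rw [show ((e:ℝ) + 1) = (d₁:ℝ) by exact_mod_cast hed]
    have hA2 : Aint G (e+k+1) = ENNReal.ofReal ((d₂ : ℝ))⁻¹ * ENNReal.ofReal I₂ := by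
      rw [A_eq hG hrangeG (e+k+1), hJ d₂ (by omega), hekd1]
      norm_num
      rw [show ((e:ℝ) + (k:ℝ) + 1 + 1) = (d₂:ℝ) by exact_mod_cast hekd1]
    -- ENNReal inequality
    have hDeq := D_eq hG e k
    have hDge := D_ge hG hmono hnwuG e k
    have hkey : ENNReal.ofReal (((k:ℝ)+1)/((e:ℝ)+(k:ℝ)+2)) * Aint G e +
        (ENNReal.ofReal (((k:ℝ)+1)/((e:ℝ)+1)) * Aint G (e+k+1) + Aint G (e+k+1)) ≤ Aint G e := by
      calc ENNReal.ofReal (((k:ℝ)+1)/((e:ℝ)+(k:ℝ)+2)) * Aint G e +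
            (ENNReal.ofReal (((k:ℝ)+1)/((e:ℝ)+1)) * Aint G (e+k+1) + Aint G (e+k+1))
          = (ENNReal.ofReal (((k:ℝ)+1)/((e:ℝ)+(k:ℝ)+2)) * Aint G e +
              ENNReal.ofReal (((k:ℝ)+1)/((e:ℝ)+1)) * Aint G (e+k+1)) + Aint G (e+k+1) := by
            exact (add_assoc _ _ _).symm
        _ ≤ Dint G e k + Aint G (e+k+1) := add_le_add_left hDge _
        _ = Aint G e := hDeq
    have hfin1 : Aint G e ≠ ⊤ := by
      rw [hA1]
      exact ENNReal.mul_ne_top ENNReal.ofReal_ne_top ENNReal.ofReal_ne_top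
    have hfin2 : Aint G (e+k+1) ≠ ⊤ := by
      rw [hA2]
      exact ENNReal.mul_ne_top ENNReal.ofReal_ne_top ENNReal.ofReal_ne_top
    have ha : (Aint G e).toReal = (d₁ : ℝ)⁻¹ * I₁ := by
      rw [hA1, ENNReal.toReal_mul, ENNReal.toReal_ofReal (by positivity),
        ENNReal.toReal_ofReal hI1nn]
    have hb : (Aint G (e+k+1)).toReal = (d₂ : ℝ)⁻¹ * I₂ := by
      rw [hA2, ENNReal.toReal_mul, ENNReal.toReal_ofReal (by positivity),
        ENNReal.toReal_ofReal hI2nn]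
    have hx1 : ENNReal.ofReal (((k:ℝ)+1)/((e:ℝ)+(k:ℝ)+2)) * Aint G e ≠ ⊤ :=
      ENNReal.mul_ne_top ENNReal.ofReal_ne_top hfin1
    have hx2 : ENNReal.ofReal (((k:ℝ)+1)/((e:ℝ)+1)) * Aint G (e+k+1) ≠ ⊤ :=
      ENNReal.mul_ne_top ENNReal.ofReal_ne_top hfin2
    have hreal := ENNReal.toReal_mono hfin1 hkey
    rw [ENNReal.toReal_add hx1 (ENNReal.add_ne_top.mpr ⟨hx2, hfin2⟩),
      ENNReal.toReal_add hx2 hfin2, ENNReal.toReal_mul, ENNReal.toReal_mul,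
      ENNReal.toReal_ofReal (by positivity), ENNReal.toReal_ofReal (by positivity),
      ha, hb] at hreal
    -- cast bookkeeping
    have hd1pos : (0:ℝ) < d₁ := by exact_mod_cast hd₁
    have hd2pos : (0:ℝ) < d₂ := by exact_mod_cast (lt_of_lt_of_le (by omega : 0 < d₁) hd)
    have hd1ne : (d₁:ℝ) ≠ 0 := ne_of_gt hd1pos
    have hd2ne : (d₂:ℝ) ≠ 0 := ne_of_gt hd2pos
    have hcast1 : (e:ℝ) + 1 = (d₁:ℝ) := by exact_mod_cast hed
    have hcast2 : (e:ℝ) + (k:ℝ) + 2 = (d₂:ℝ) := by exact_mod_cast hekd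
    have hcast3 : (k:ℝ) + 1 = (d₂:ℝ) - (d₁:ℝ) := by
      have h' : k + 1 + d₁ = d₂ := by omega
      have := congrArg (fun n : ℕ => (n:ℝ)) h'
      push_cast at this
      linarith
    rw [hcast1, hcast2, hcast3] at hreal
    -- clear denominators
    have h2 := mul_le_mul_of_nonneg_left hreal (show (0:ℝ) ≤ (d₁:ℝ) * (d₂:ℝ) by positivity)
    have e1 : (d₁:ℝ) * (d₂:ℝ) *
        (((d₂:ℝ) - (d₁:ℝ))/(d₂:ℝ) * (((d₁:ℝ))⁻¹ * I₁) +
          (((d₂:ℝ) - (d₁:ℝ))/(d₁:ℝ) * (((d₂:ℝ))⁻¹ * I₂) + ((d₂:ℝ))⁻¹ * I₂)) =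
        ((d₂:ℝ) - (d₁:ℝ)) * I₁ + (((d₂:ℝ) - (d₁:ℝ)) * I₂ + (d₁:ℝ) * I₂) := by
      field_simp
    have e2 : (d₁:ℝ) * (d₂:ℝ) * (((d₁:ℝ))⁻¹ * I₁) = (d₂:ℝ) * I₁ := by
      field_simp
    have h3 : ((d₂:ℝ) - (d₁:ℝ)) * I₁ + (((d₂:ℝ) - (d₁:ℝ)) * I₂ + (d₁:ℝ) * I₂) ≤
        (d₂:ℝ) * I₁ := by
      rw [← e1, ← e2]
      exact h2
    rw [hIeq d₁, hIeq d₂, ← hI1, ← hI2]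
    nlinarith [h3]
end
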